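/- For integers m, d, t with 0 ≤ t and t+1 ≤ m − d − 1 and d + 2 ≥ t + 1 (so that all binomial coefficients below make sense, with m ≥ d+2), one has ∑_{j=0}^{m} C(m−d−2, j−t−1) / C(m, j) = (m+1) / ((d+3) · C(d+2, t+1)). -/

import Mathlib

lemma aux_sum : ∀ s a b : ℕ, b ≤ a →
    ∑ i ∈ Finset.range (s+1), ((s.choose i : ℚ)) / ((s+a).choose (i+b)) =
      (s+a+1) / ((a+1) * (a.choose b)) := by
  intro s
  induction s with
  | zero =>
    intro a b hb
    have h : (0:ℚ) < (a.choose b : ℚ) := by exact_mod_cast Nat.choose_pos hb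
    have ha : (0:ℚ) < (a:ℚ) + 1 := by positivity
    simp only [Finset.sum_range_one, Nat.choose_zero_right, Nat.cast_one, Nat.zero_add, zero_add,
      Nat.cast_zero]
    field_simp
  | succ s ih =>
    intro a b hb
    rw [Finset.sum_range_succ']
    have step1 : ∀ i ∈ Finset.range (s+1),
        ((s+1).choose (i+1) : ℚ) / ((s+1+a).choose (i+1+b)) =
        (s.choose i : ℚ) / ((s+(a+1)).choose (i+(b+1)))
          + (s.choose (i+1) : ℚ) / ((s+(a+1)).choose (i+1+b)) := by
      intro i _
      rw [Nat.choose_succ_succ]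
      push_cast
      rw [add_div]
      congr 2 <;> ring_nf
    rw [Finset.sum_congr rfl step1, Finset.sum_add_distrib]
    have shift : (∑ i ∈ Finset.range (s+1), (s.choose (i+1) : ℚ) / ((s+(a+1)).choose (i+1+b)))
          + ((s+1).choose 0 : ℚ) / ((s+1+a).choose (0+b))
        = ∑ i ∈ Finset.range (s+1), (s.choose i : ℚ) / ((s+(a+1)).choose (i+b)) := by
      rw [Finset.sum_range_succ' (fun i => (s.choose i : ℚ) / ((s+(a+1)).choose (i+b))) s]
      rw [Finset.sum_range_succ]
      have e : s+1+a = s+(a+1) := by omega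
      simp [e, Nat.choose_succ_self]
    rw [add_assoc, shift]
    have hb1 : b ≤ a + 1 := le_trans hb (Nat.le_succ a)
    have hb2 : b + 1 ≤ a + 1 := Nat.succ_le_succ hb
    rw [ih (a+1) (b+1) hb2, ih (a+1) b hb1]
    have c1 : (0:ℚ) < ((a+1).choose (b+1) : ℚ) := by exact_mod_cast Nat.choose_pos hb2
    have c2 : (0:ℚ) < ((a+1).choose b : ℚ) := by exact_mod_cast Nat.choose_pos hb1
    have c3 : (0:ℚ) < (a.choose b : ℚ) := by exact_mod_cast Nat.choose_pos hb
    have rel1 : ((a+1).choose (b+1) : ℚ) * ((b:ℚ)+1) = ((a:ℚ)+1) * (a.choose b) := by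
      have h := Nat.add_one_mul_choose_eq a b
      exact_mod_cast h.symm
    have rel2 : ((a+2).choose (b+1) : ℚ) * ((b:ℚ)+1) = ((a:ℚ)+2) * ((a+1).choose b) := by
      have h := Nat.add_one_mul_choose_eq (a+1) b
      exact_mod_cast h.symm
    have pascal : ((a+2).choose (b+1) : ℚ) = ((a+1).choose b : ℚ) + ((a+1).choose (b+1) : ℚ) := by
      exact_mod_cast Nat.choose_succ_succ (a+1) b
    have key2 : ((a:ℚ)+1) * (a.choose b : ℚ) * (((a+1).choose b : ℚ) + ((a+1).choose (b+1) : ℚ))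
        = ((a:ℚ)+2) * ((a+1).choose b : ℚ) * ((a+1).choose (b+1) : ℚ) := by
      linear_combination ((a+1).choose (b+1) : ℚ) * rel2 - ((a+2).choose (b+1) : ℚ) * rel1 - ((a:ℚ)+1)*(a.choose b : ℚ)*pascal
    push_cast
    field_simp
    linear_combination ((s:ℚ)+(a:ℚ)+2) * key2

theorem sum_choose_div_choose (m d t : ℕ) (h1 : d + t + 2 ≤ m) (h2 : t + 1 ≤ d + 2) :
    ∑ j ∈ Finset.range (m + 1),
        (if t + 1 ≤ j then ((m - d - 2).choose (j - t - 1) : ℚ) else 0) / (m.choose j) =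
      (m + 1) / ((d + 3) * ((d + 2).choose (t + 1))) := by
  obtain ⟨s, rfl⟩ : ∃ s, m = d + 2 + s := ⟨m - (d + 2), by omega⟩
  have hts : t ≤ d + 1 := by omega
  simp only [show d + 2 + s - d - 2 = s from by omega]
  rw [Finset.range_eq_Ico,
    ← Finset.sum_Ico_consecutive _ (Nat.zero_le (t + 1)) (by omega : t + 1 ≤ d + 2 + s + 1)]
  have first : ∑ j ∈ Finset.Ico 0 (t + 1),
      (if t + 1 ≤ j then (s.choose (j - t - 1) : ℚ) else 0) / ((d + 2 + s).choose j) = 0 := by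
    apply Finset.sum_eq_zero
    intro j hj
    simp only [Finset.mem_Ico] at hj
    rw [if_neg (by omega)]
    simp
  rw [first, zero_add, Finset.sum_Ico_eq_sum_range]
  have second : ∑ i ∈ Finset.range (d + 2 + s + 1 - (t + 1)),
      (if t + 1 ≤ t + 1 + i then (s.choose (t + 1 + i - t - 1) : ℚ) else 0) / ((d + 2 + s).choose (t + 1 + i))
      = ∑ i ∈ Finset.range (s + 1), (s.choose i : ℚ) / ((s + (d + 2)).choose (i + (t + 1))) := by
    have congr1 : ∀ i ∈ Finset.range (d + 2 + s + 1 - (t + 1)),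
        (if t + 1 ≤ t + 1 + i then (s.choose (t + 1 + i - t - 1) : ℚ) else 0) / ((d + 2 + s).choose (t + 1 + i))
        = (s.choose i : ℚ) / ((s + (d + 2)).choose (i + (t + 1))) := by
      intro i _
      rw [if_pos (by omega), show t + 1 + i - t - 1 = i from by omega,
        show t + 1 + i = i + (t + 1) from by omega, show d + 2 + s = s + (d + 2) from by omega]
    rw [Finset.sum_congr rfl congr1]
    refine (Finset.sum_subset (Finset.range_subset_range.mpr (by omega)) ?_).symm
    intro i _ hi
    simp only [Finset.mem_range, not_lt] at hi
    rw [Nat.choose_eq_zero_of_lt (by omega)]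
    simp
  rw [second, aux_sum s (d + 2) (t + 1) h2]
  push_cast
  ring_nf
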